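/- arXiv:2605.11165 — 3 statements merged into one kernel-verified Lean document; each statement's English description precedes it below -/
import Mathlib

section
/- Fix functions f, f̄ : U → ℝ^M on a finite set U with Σ_{x∈U} ‖f̄(x) − f(x)‖₁ ≤ 2B, and suppose f has uniform margin γ > 0 on U, i.e., for every x ∈ U, the largest coordinate of f(x) exceeds every other coordinate by at least γ. Let y : U → {1,…,M} be any labeling. Then the number of points x ∈ U where argmax f̄(x) ≠ y(x) is at most (number of points where argmax f(x) ≠ y(x)) + 2B/γ. Equivalently, Err_U(f̄) ≤ Err_U(f) + 2B/(γ|U|), where Err_U(g) is the fraction of x ∈ U with argmax g(x) ≠ y(x). -/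
/-- if `f` has uniform margin `γ > 0` on `U` (with argmax map `cstar`),
`f̄` has argmax map `cbar`, and the aggregated ℓ₁-distance between `f̄` and `f` over `U`
is at most `2B`, then the number of mistakes of `cbar` w.r.t. labels `y` exceeds that of
`cstar` by at most `2B/γ`; equivalently `Err_U(f̄) ≤ Err_U(f) + 2B/(γ|U|)`. -/
theorem stmt3 {X : Type*} [DecidableEq X] {M : ℕ} (U : Finset X) (hU : U.Nonempty)
    (f fbar : X → Fin M → ℝ) (y : X → Fin M) (cstar cbar : X → Fin M) (γ B : ℝ)
    (hγ : 0 < γ)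
    (hdist : ∑ x ∈ U, ∑ c : Fin M, |fbar x c - f x c| ≤ 2 * B)
    (hmargin : ∀ x ∈ U, ∀ j : Fin M, j ≠ cstar x → γ ≤ f x (cstar x) - f x j)
    (hcbar : ∀ x ∈ U, ∀ j : Fin M, fbar x j ≤ fbar x (cbar x)) :
    ((U.filter fun x => cbar x ≠ y x).card : ℝ) ≤
      ((U.filter fun x => cstar x ≠ y x).card : ℝ) + 2 * B / γ ∧
    ((U.filter fun x => cbar x ≠ y x).card : ℝ) / (U.card : ℝ) ≤
      ((U.filter fun x => cstar x ≠ y x).card : ℝ) / (U.card : ℝ)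
        + 2 * B / (γ * (U.card : ℝ)) := by
  classical
  set S := U.filter fun x => cbar x ≠ cstar x with hS
  -- each x in S contributes at least γ to the ℓ₁ sum
  have hkey : ∀ x ∈ S, γ ≤ ∑ c : Fin M, |fbar x c - f x c| := by
    intro x hx
    rw [hS, Finset.mem_filter] at hx
    obtain ⟨hxU, hne⟩ := hx
    have h1 : γ ≤ f x (cstar x) - f x (cbar x) := hmargin x hxU _ hne
    have h2 : fbar x (cstar x) ≤ fbar x (cbar x) := hcbar x hxU _
    have hpair : γ ≤ |fbar x (cstar x) - f x (cstar x)| + |fbar x (cbar x) - f x (cbar x)| := by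
      have := abs_le_abs (le_refl (f x (cstar x) - fbar x (cstar x)))
      calc γ ≤ (f x (cstar x) - fbar x (cstar x)) + (fbar x (cbar x) - f x (cbar x)) := by
                linarith
        _ ≤ |fbar x (cstar x) - f x (cstar x)| + |fbar x (cbar x) - f x (cbar x)| := by
                have := abs_nonneg (fbar x (cstar x) - f x (cstar x))
                have h3 : f x (cstar x) - fbar x (cstar x) ≤ |fbar x (cstar x) - f x (cstar x)| := by
                  rw [abs_sub_comm]; exact le_abs_self _
                have h4 : fbar x (cbar x) - f x (cbar x) ≤ |fbar x (cbar x) - f x (cbar x)| :=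
                  le_abs_self _
                linarith
    have hne' : cstar x ≠ cbar x := fun h => hne h.symm
    calc γ ≤ |fbar x (cstar x) - f x (cstar x)| + |fbar x (cbar x) - f x (cbar x)| := hpair
      _ = ∑ c ∈ ({cstar x, cbar x} : Finset (Fin M)), |fbar x c - f x c| := by
            rw [Finset.sum_pair hne']
      _ ≤ ∑ c : Fin M, |fbar x c - f x c| :=
            Finset.sum_le_sum_of_subset_of_nonneg (Finset.subset_univ _)
              (fun _ _ _ => abs_nonneg _)
  have hScard : γ * (S.card : ℝ) ≤ 2 * B := by
    have h1 : γ * (S.card : ℝ) ≤ ∑ x ∈ S, ∑ c : Fin M, |fbar x c - f x c| := by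
      rw [mul_comm]
      calc (S.card : ℝ) * γ = ∑ _x ∈ S, γ := by rw [Finset.sum_const, nsmul_eq_mul]
        _ ≤ _ := Finset.sum_le_sum hkey
    have h2 : ∑ x ∈ S, ∑ c : Fin M, |fbar x c - f x c|
        ≤ ∑ x ∈ U, ∑ c : Fin M, |fbar x c - f x c| :=
      Finset.sum_le_sum_of_subset_of_nonneg (Finset.filter_subset _ _)
        (fun _ _ _ => Finset.sum_nonneg fun _ _ => abs_nonneg _)
    linarith
  have hSle : (S.card : ℝ) ≤ 2 * B / γ := by
    rw [le_div_iff₀ hγ]; linarith [hScard]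
  -- filter inclusion
  have hsub : (U.filter fun x => cbar x ≠ y x) ⊆
      (U.filter fun x => cstar x ≠ y x) ∪ S := by
    intro x hx
    rw [Finset.mem_filter] at hx
    rw [Finset.mem_union, hS, Finset.mem_filter, Finset.mem_filter]
    by_cases h : cstar x = y x
    · exact Or.inr ⟨hx.1, fun hc => hx.2 (hc.trans h)⟩
    · exact Or.inl ⟨hx.1, h⟩
  have hcard : ((U.filter fun x => cbar x ≠ y x).card : ℝ) ≤
      ((U.filter fun x => cstar x ≠ y x).card : ℝ) + (S.card : ℝ) := by
    have := Finset.card_le_card hsub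
    have h2 := Finset.card_union_le (U.filter fun x => cstar x ≠ y x) S
    exact_mod_cast le_trans this h2
  have main : ((U.filter fun x => cbar x ≠ y x).card : ℝ) ≤
      ((U.filter fun x => cstar x ≠ y x).card : ℝ) + 2 * B / γ := by linarith
  refine ⟨main, ?_⟩
  have hUpos : (0 : ℝ) < (U.card : ℝ) := by
    exact_mod_cast Finset.card_pos.mpr hU
  calc ((U.filter fun x => cbar x ≠ y x).card : ℝ) / (U.card : ℝ)
      ≤ (((U.filter fun x => cstar x ≠ y x).card : ℝ) + 2 * B / γ) / (U.card : ℝ) := by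
        exact by gcongr
    _ = ((U.filter fun x => cstar x ≠ y x).card : ℝ) / (U.card : ℝ)
        + 2 * B / (γ * (U.card : ℝ)) := by
        rw [add_div, div_div]
end

section
/- Let Φ : ℝ^d → ℝ be twice continuously differentiable and μ-strongly convex (∇²Φ(θ) ⪰ μI with μ > 0), with minimizer θ₁ (so ∇Φ(θ₁) = 0). Let Ψ : ℝ^d → ℝ be differentiable with L-Lipschitz gradient where 0 < L < μ, and suppose θ̂ satisfies ∇Φ(θ̂) + ∇Ψ(θ̂) = 0. Then ‖θ̂ − θ₁‖ ≤ ‖∇Ψ(θ₁)‖ / (μ − L). -/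
/-- stability under objective shift. If `gradΦ` is the gradient of a
`μ`-strongly convex function (strongly monotone), `θ₁` its critical point,
`gradΨ` is `L`-Lipschitz with `0 < L < μ`, and `θ̂` satisfies
`gradΦ(θ̂) + gradΨ(θ̂) = 0`, then `‖θ̂ − θ₁‖ ≤ ‖gradΨ(θ₁)‖/(μ − L)`. -/
theorem stmt9 {d : ℕ} (gradΦ gradΨ : EuclideanSpace ℝ (Fin d) → EuclideanSpace ℝ (Fin d))
    (μ L : ℝ) (hL : 0 < L) (hLμ : L < μ)
    (θ₁ θhat : EuclideanSpace ℝ (Fin d))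
    (hstrong : ∀ θ θ' : EuclideanSpace ℝ (Fin d),
      μ * ‖θ - θ'‖ ^ 2 ≤ inner ℝ (gradΦ θ - gradΦ θ') (θ - θ'))
    (hlip : ∀ θ θ' : EuclideanSpace ℝ (Fin d), ‖gradΨ θ - gradΨ θ'‖ ≤ L * ‖θ - θ'‖)
    (hθ₁ : gradΦ θ₁ = 0)
    (hθhat : gradΦ θhat + gradΨ θhat = 0) :
    ‖θhat - θ₁‖ ≤ ‖gradΨ θ₁‖ / (μ - L) := by

  set δ := θhat - θ₁ with hδ
  have h1 : μ * ‖δ‖ ^ 2 ≤ inner ℝ (gradΦ θhat - gradΦ θ₁) δ := hstrong θhat θ₁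
  have h2 : gradΦ θhat - gradΦ θ₁ = (gradΨ θ₁ - gradΨ θhat) - gradΨ θ₁ := by
    rw [hθ₁]
    have : gradΦ θhat = -gradΨ θhat := by
      have h := hθhat
      have : gradΦ θhat = 0 - gradΨ θhat := by rw [← h]; abel
      simpa using this
    rw [this]; abel
  have h3 : (inner ℝ (gradΦ θhat - gradΦ θ₁) δ : ℝ)
      = inner ℝ (gradΨ θ₁ - gradΨ θhat) δ - inner ℝ (gradΨ θ₁) δ := by
    rw [h2, inner_sub_left]
  have h4 : (inner ℝ (gradΨ θ₁ - gradΨ θhat) δ : ℝ) ≤ L * ‖δ‖ ^ 2 := by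
    calc (inner ℝ (gradΨ θ₁ - gradΨ θhat) δ : ℝ) ≤ ‖gradΨ θ₁ - gradΨ θhat‖ * ‖δ‖ :=
          real_inner_le_norm _ _
      _ ≤ (L * ‖θ₁ - θhat‖) * ‖δ‖ := by
          apply mul_le_mul_of_nonneg_right (hlip θ₁ θhat) (norm_nonneg _)
      _ = L * ‖δ‖ ^ 2 := by
          have hn : θ₁ - θhat = -δ := by rw [hδ]; abel
          rw [hn, norm_neg]; ring
  have h5 : -(inner ℝ (gradΨ θ₁) δ : ℝ) ≤ ‖gradΨ θ₁‖ * ‖δ‖ := by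
    calc -(inner ℝ (gradΨ θ₁) δ : ℝ) = inner ℝ (-(gradΨ θ₁)) δ := by rw [inner_neg_left]
      _ ≤ ‖-(gradΨ θ₁)‖ * ‖δ‖ := real_inner_le_norm _ _
      _ = ‖gradΨ θ₁‖ * ‖δ‖ := by rw [norm_neg]
  have key : (μ - L) * ‖δ‖ ^ 2 ≤ ‖gradΨ θ₁‖ * ‖δ‖ := by nlinarith [h1, h3, h4, h5]
  have hpos : 0 < μ - L := by linarith
  rcases eq_or_lt_of_le (norm_nonneg δ) with h0 | h0
  · rw [← h0]; positivity
  · rw [le_div_iff₀ hpos]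
    nlinarith [key, h0]
end

section
/- Let Φ be μ-strongly convex with minimizer θ₁ and let Ψ have L-Lipschitz gradient with 0 < L < μ and ‖∇Ψ(θ₁)‖ ≤ τ. Let θ* minimize a μ-strongly convex function Φ₀ with sup_θ |Φ(θ) − Φ₀(θ)| ≤ ε. If θ̂ is a critical point of Φ + Ψ, then ‖θ̂ − θ*‖ ≤ τ/(μ − L) + √(4ε/μ). -/
/-- combined stability bound. With `Φ` `μ`-strongly convex
(gradient strongly monotone, critical point `θ₁` which minimizes `Φ`),
`Ψ` with `L`-Lipschitz gradient, `0 < L < μ`, `‖∇Ψ(θ₁)‖ ≤ τ`, a `μ`-strongly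
convex `Φ₀` with minimizer `θ*` and `sup_θ |Φ(θ) − Φ₀(θ)| ≤ ε`, any critical
point `θ̂` of `Φ + Ψ` satisfies `‖θ̂ − θ*‖ ≤ τ/(μ − L) + √(4ε/μ)`. -/
theorem stmt11 {d : ℕ} (Φ Φ₀ : EuclideanSpace ℝ (Fin d) → ℝ)
    (gradΦ gradΨ : EuclideanSpace ℝ (Fin d) → EuclideanSpace ℝ (Fin d))
    (μ L τ ε : ℝ) (hL : 0 < L) (hLμ : L < μ) (hτ : 0 ≤ τ) (hε : 0 ≤ ε)
    (θ₁ θstar θhat : EuclideanSpace ℝ (Fin d))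
    (hgrad : ∀ θ, HasGradientAt Φ (gradΦ θ) θ)
    (hstrong : ∀ θ θ' : EuclideanSpace ℝ (Fin d),
      μ * ‖θ - θ'‖ ^ 2 ≤ inner ℝ (gradΦ θ - gradΦ θ') (θ - θ'))
    (hlip : ∀ θ θ' : EuclideanSpace ℝ (Fin d), ‖gradΨ θ - gradΨ θ'‖ ≤ L * ‖θ - θ'‖)
    (hθ₁crit : gradΦ θ₁ = 0)
    (hθ₁min : ∀ θ, Φ θ₁ ≤ Φ θ)
    (hτbound : ‖gradΨ θ₁‖ ≤ τ)
    (hΦ₀sc : ∀ θ, Φ₀ θstar + μ / 2 * ‖θ - θstar‖ ^ 2 ≤ Φ₀ θ)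
    (happrox : ∀ θ, |Φ θ - Φ₀ θ| ≤ ε)
    (hθhat : gradΦ θhat + gradΨ θhat = 0) :
    ‖θhat - θstar‖ ≤ τ / (μ - L) + Real.sqrt (4 * ε / μ) := by
  have hμL : 0 < μ - L := by linarith
  have hμ : 0 < μ := by linarith
  -- Part 1
  have h1 : ‖θhat - θ₁‖ ≤ τ / (μ - L) := by
    set x := θhat - θ₁ with hx
    have key : μ * ‖x‖ ^ 2 ≤ inner ℝ (gradΦ θhat - gradΦ θ₁) x := hstrong _ _
    have hΦhat : gradΦ θhat = -gradΨ θhat := by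
      have := hθhat; linear_combination (norm := module) this
    rw [hΦhat, hθ₁crit, sub_zero] at key
    have heq : (-gradΨ θhat : EuclideanSpace ℝ (Fin d)) =
        (gradΨ θ₁ - gradΨ θhat) + (-gradΨ θ₁) := by module
    rw [heq, inner_add_left] at key
    have hb1 : (inner ℝ (gradΨ θ₁ - gradΨ θhat) x : ℝ) ≤ L * ‖x‖ * ‖x‖ := by
      calc (inner ℝ (gradΨ θ₁ - gradΨ θhat) x : ℝ) ≤ ‖gradΨ θ₁ - gradΨ θhat‖ * ‖x‖ :=
            real_inner_le_norm _ _
        _ ≤ L * ‖x‖ * ‖x‖ := by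
            have h := hlip θ₁ θhat
            rw [norm_sub_rev θ₁ θhat, ← hx] at h
            nlinarith [norm_nonneg x]
    have hb2 : (inner ℝ (-gradΨ θ₁) x : ℝ) ≤ τ * ‖x‖ := by
      calc (inner ℝ (-gradΨ θ₁) x : ℝ) ≤ ‖(-gradΨ θ₁ : EuclideanSpace ℝ (Fin d))‖ * ‖x‖ :=
            real_inner_le_norm _ _
        _ ≤ τ * ‖x‖ := by rw [norm_neg]; exact mul_le_mul_of_nonneg_right hτbound (norm_nonneg _)
    have hkey2 : (μ - L) * ‖x‖ * ‖x‖ ≤ τ * ‖x‖ := by nlinarith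
    rcases eq_or_lt_of_le (norm_nonneg x) with h0 | h0
    · rw [← h0]; positivity
    · rw [le_div_iff₀ hμL]
      have := mul_le_mul_of_nonneg_right (le_of_lt h0) (le_refl 0)
      nlinarith
  -- Part 2
  have h2 : ‖θ₁ - θstar‖ ≤ Real.sqrt (4 * ε / μ) := by
    have hsc := hΦ₀sc θ₁
    have ha1 := abs_le.mp (happrox θ₁)
    have ha2 := abs_le.mp (happrox θstar)
    have hmin := hθ₁min θstar
    have hsq : ‖θ₁ - θstar‖ ^ 2 ≤ 4 * ε / μ := by
      rw [le_div_iff₀ hμ]; nlinarith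
    calc ‖θ₁ - θstar‖ = Real.sqrt (‖θ₁ - θstar‖ ^ 2) := by
          rw [Real.sqrt_sq (norm_nonneg _)]
      _ ≤ Real.sqrt (4 * ε / μ) := Real.sqrt_le_sqrt hsq
  calc ‖θhat - θstar‖ ≤ ‖θhat - θ₁‖ + ‖θ₁ - θstar‖ := norm_sub_le_norm_sub_add_norm_sub _ _ _
    _ ≤ τ / (μ - L) + Real.sqrt (4 * ε / μ) := add_le_add h1 h2
end
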